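/- Let M = F_{p^m} with p odd and m even, let r = p^{k+m/2}, and let A be a non-square element of M^×. For any nonzero v in M, the F_p-linear map f : M → M defined by f(x) = x^r v + A x v^r is bijective. -/
import Mathlib

theorem stmt_8 (p m k : ℕ) (hp : p.Prime) (hodd : Odd p) (hm : Even m) (hm0 : 0 < m)
    (hk1 : 1 ≤ k) (hk2 : k ≤ m - 1)
    (F : Type) [Field F] [Fintype F] (hF : Fintype.card F = p ^ m)
    (A : F) (hA : ¬ IsSquare A) (v : F) (hv : v ≠ 0) :
    Function.Bijective
      (fun x : F => x ^ p ^ (k + m / 2) * v + A * x * v ^ p ^ (k + m / 2)) := by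
  haveI : Fact p.Prime := ⟨hp⟩
  -- characteristic of F is p
  haveI hchar : CharP F p := by
    obtain ⟨n, hq, hcard⟩ := FiniteField.card F (ringChar F)
    have : ringChar F = p := by
      have : (ringChar F) ∣ p ^ m := by
        rw [← hF, hcard]
        exact dvd_pow_self _ n.pos.ne'
      rcases (Nat.Prime.dvd_of_dvd_pow hq this) with h
      exact (Nat.prime_dvd_prime_iff_eq hq hp).mp h
    rw [← this]
    exact ringChar.charP F
  set s := k + m / 2 with hs
  set q := p ^ s with hqdef
  rw [← Finite.injective_iff_bijective]
  intro x y hxy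
  simp only at hxy
  by_contra hne
  have hz : x - y ≠ 0 := sub_ne_zero.mpr hne
  have hpow : (x - y) ^ q = x ^ q - y ^ q := sub_pow_char_pow (p := p) x y s
  have heq : (x - y) ^ q * v + A * (x - y) * v ^ q = 0 := by
    linear_combination v * hpow + hxy
  set w : F := (x - y) * v⁻¹ with hw
  have hwne : w ≠ 0 := mul_ne_zero hz (inv_ne_zero hv)
  have hinv : (v⁻¹) ^ q * v ^ q = 1 := by rw [← mul_pow, inv_mul_cancel₀ hv, one_pow]
  have hinv2 : v⁻¹ * v = 1 := inv_mul_cancel₀ hv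
  have hkey : w ^ q + A * w = 0 := by
    apply mul_left_cancel₀ (pow_ne_zero (q + 1) hv)
    rw [mul_zero, hw, mul_pow]
    linear_combination heq + ((x - y) ^ q * v) * hinv + (A * (x - y) * v ^ q) * hinv2
  have hAeq : A = -1 * w ^ (q - 1) := by
    have hq1 : q - 1 + 1 = q := Nat.succ_pred_eq_of_pos (pow_pos hp.pos s)
    apply mul_right_cancel₀ hwne
    rw [mul_assoc, neg_one_mul, ← pow_succ, hq1]
    linear_combination hkey
  apply hA
  rw [hAeq]
  have h1 : IsSquare (-1 : F) := by
    rw [FiniteField.isSquare_neg_one_iff, hF]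
    obtain ⟨m2, hm2⟩ := hm
    have hm2' : m = 2 * m2 := by omega
    have : p ^ m = (p ^ m2) ^ 2 := by rw [hm2']; ring
    rw [this]
    obtain ⟨t, ht⟩ := hodd.pow (n := m2)
    have h4 : (p ^ m2) ^ 2 = 4 * (t * t) + 4 * t + 1 := by rw [ht]; ring
    omega
  have h2 : IsSquare (w ^ (q - 1)) := by
    apply Even.isSquare_pow
    obtain ⟨t, ht⟩ := hodd.pow (n := s)
    rw [← hqdef] at ht
    exact ⟨t, by omega⟩
  exact h1.mul h2
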